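/- For real numbers x_1,...,x_N pairwise distinct and any integer k with 2 ≤ k ≤ N, the sum over ordered pairs i≠j of e_{k-1}^{N-1}(x with coordinate i removed)·x_i·x_j/(x_i - x_j) equals -(k(k-1)/2)·e_k^N(x). -/

import Mathlib

open Finset

/-- The elementary symmetric polynomial of degree `k` in the variables indexed by `S`. -/
noncomputable def esym {N : ℕ} (k : ℕ) (S : Finset (Fin N)) (x : Fin N → ℝ) : ℝ :=
  ∑ s ∈ Finset.powersetCard k S, ∏ i ∈ s, x i

lemma esym_insert {N : ℕ} (x : Fin N → ℝ) (m : ℕ) (a : Fin N) (S : Finset (Fin N)) (ha : a ∉ S) :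
    esym (m+1) (insert a S) x = esym (m+1) S x + x a * esym m S x := by
  unfold esym
  rw [Finset.powersetCard_succ_insert ha, Finset.sum_union, Finset.sum_image, Finset.mul_sum]
  · congr 1
    refine Finset.sum_congr rfl fun T hT => ?_
    exact Finset.prod_insert (fun h => ha ((Finset.mem_powersetCard.mp hT).1 h))
  · intro T hT U hU h
    have haT : a ∉ T := fun h' => ha ((Finset.mem_powersetCard.mp hT).1 h')
    have haU : a ∉ U := fun h' => ha ((Finset.mem_powersetCard.mp hU).1 h')
    rw [← Finset.erase_insert haT, ← Finset.erase_insert haU, h]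
  · rw [Finset.disjoint_left]
    intro T hT hT2
    obtain ⟨U, hU, rfl⟩ := Finset.mem_image.mp hT2
    exact ha ((Finset.mem_powersetCard.mp hT).1 (Finset.mem_insert_self a U))

lemma key {N : ℕ} (x : Fin N → ℝ) (m : ℕ) (S : Finset (Fin N)) :
    ∑ i ∈ S, x i * esym m (S.erase i) x = ((m : ℝ)+1) * esym (m+1) S x := by
  unfold esym
  rw [Finset.mul_sum]
  have hR : ∀ T ∈ Finset.powersetCard (m+1) S,
      ((m:ℝ)+1) * ∏ i ∈ T, x i = ∑ i ∈ T, x i * ∏ j ∈ T.erase i, x j := by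
    intro T hT
    obtain ⟨hTS, hcard⟩ := Finset.mem_powersetCard.mp hT
    rw [Finset.sum_congr rfl (fun i hi => Finset.mul_prod_erase T x hi),
      Finset.sum_const, hcard, nsmul_eq_mul]
    push_cast; ring
  rw [Finset.sum_congr rfl hR]
  simp_rw [Finset.mul_sum]
  rw [Finset.sum_sigma', Finset.sum_sigma']
  refine Finset.sum_nbij' (fun p => ⟨insert p.1 p.2, p.1⟩) (fun q => ⟨q.2, q.1.erase q.2⟩)
    ?_ ?_ ?_ ?_ ?_
  · rintro ⟨i, T⟩ hp
    simp only [Finset.mem_sigma] at hp ⊢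
    obtain ⟨hiS, hT⟩ := hp
    obtain ⟨hTS, hcard⟩ := Finset.mem_powersetCard.mp hT
    have hiT : i ∉ T := fun h => (Finset.mem_erase.mp (hTS h)).1 rfl
    refine ⟨Finset.mem_powersetCard.mpr ⟨?_, ?_⟩, Finset.mem_insert_self i T⟩
    · exact Finset.insert_subset hiS (hTS.trans (Finset.erase_subset i S))
    · rw [Finset.card_insert_of_notMem hiT, hcard]
  · rintro ⟨T, i⟩ hq
    simp only [Finset.mem_sigma] at hq ⊢
    obtain ⟨hT, hiT⟩ := hq
    obtain ⟨hTS, hcard⟩ := Finset.mem_powersetCard.mp hT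
    refine ⟨hTS hiT, Finset.mem_powersetCard.mpr ⟨?_, ?_⟩⟩
    · intro j hj
      obtain ⟨hji, hjT⟩ := Finset.mem_erase.mp hj
      exact Finset.mem_erase.mpr ⟨hji, hTS hjT⟩
    · rw [Finset.card_erase_of_mem hiT, hcard]; rfl
  · rintro ⟨i, T⟩ hp
    simp only [Finset.mem_sigma] at hp
    obtain ⟨hiS, hT⟩ := hp
    obtain ⟨hTS, hcard⟩ := Finset.mem_powersetCard.mp hT
    have hiT : i ∉ T := fun h => (Finset.mem_erase.mp (hTS h)).1 rfl
    simp [Finset.erase_insert hiT]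
  · rintro ⟨T, i⟩ hq
    simp only [Finset.mem_sigma] at hq
    simp [Finset.insert_erase hq.2]
  · rintro ⟨i, T⟩ hp
    simp only [Finset.mem_sigma] at hp
    obtain ⟨hiS, hT⟩ := hp
    obtain ⟨hTS, hcard⟩ := Finset.mem_powersetCard.mp hT
    have hiT : i ∉ T := fun h => (Finset.mem_erase.mp (hTS h)).1 rfl
    simp [Finset.erase_insert hiT]

theorem stmt1 {N : ℕ} (x : Fin N → ℝ)
    (hdist : ∀ i j : Fin N, i ≠ j → x i ≠ x j)
    (k : ℕ) (hk2 : 2 ≤ k) (hkN : k ≤ N) :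
    ∑ i : Fin N, ∑ j ∈ (univ : Finset (Fin N)).erase i,
        esym (k - 1) ((univ : Finset (Fin N)).erase i) x * x i * x j / (x i - x j)
      = -((k : ℝ) * ((k : ℝ) - 1) / 2) * esym k univ x := by
  obtain ⟨m, rfl⟩ : ∃ m, k = m + 2 := ⟨k - 2, by omega⟩
  have hsub : m + 2 - 1 = m + 1 := rfl
  rw [hsub]
  set F : Fin N → Fin N → ℝ := fun i j =>
    esym (m+1) ((univ : Finset (Fin N)).erase i) x * x i * x j / (x i - x j) with hF
  show ∑ i : Fin N, ∑ j ∈ univ.erase i, F i j = _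
  have hswap : ∑ i : Fin N, ∑ j ∈ univ.erase i, F j i
      = ∑ i : Fin N, ∑ j ∈ univ.erase i, F i j := by
    rw [Finset.sum_comm' (s := univ) (t' := univ)
      (t := fun i => univ.erase i) (s' := fun j => univ.erase j) ?_]
    intro i j
    simp [Finset.mem_erase, ne_comm, and_comm]
  have h2 : ∀ i : Fin N, ∀ j ∈ (univ : Finset (Fin N)).erase i,
      F i j + F j i = -(x i * x j * esym m (((univ : Finset (Fin N)).erase i).erase j) x) := by
    intro i j hj
    have hji : j ≠ i := (Finset.mem_erase.mp hj).1
    have hx : x i - x j ≠ 0 := sub_ne_zero.mpr (hdist i j (Ne.symm hji))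
    set D := ((univ : Finset (Fin N)).erase i).erase j with hD
    have hjD : j ∉ D := Finset.notMem_erase j _
    have hiD : i ∉ D := fun h => (Finset.mem_erase.mp (Finset.mem_erase.mp h).2).1 rfl
    have hcomm : ((univ : Finset (Fin N)).erase i).erase j
        = ((univ : Finset (Fin N)).erase j).erase i := by
      ext a; simp only [Finset.mem_erase, Finset.mem_univ, and_true]; tauto
    have h1 : (univ : Finset (Fin N)).erase i = insert j D :=
      (Finset.insert_erase hj).symm
    have h2' : (univ : Finset (Fin N)).erase j = insert i D := by
      rw [hD, hcomm]
      exact (Finset.insert_erase (Finset.mem_erase.mpr ⟨fun h => hji h.symm, Finset.mem_univ i⟩)).symm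
    have e1 : esym (m+1) ((univ : Finset (Fin N)).erase i) x
        = esym (m+1) D x + x j * esym m D x := by
      rw [h1]; exact esym_insert x m j D hjD
    have e2 : esym (m+1) ((univ : Finset (Fin N)).erase j) x
        = esym (m+1) D x + x i * esym m D x := by
      rw [h2']; exact esym_insert x m i D hiD
    have hx' : x j - x i ≠ 0 := sub_ne_zero.mpr (hdist j i hji)
    simp only [hF, e1, e2]
    field_simp
    ring
  have hkey1 : ∀ i : Fin N,
      ∑ j ∈ (univ : Finset (Fin N)).erase i,
        -(x i * x j * esym m (((univ : Finset (Fin N)).erase i).erase j) x)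
      = -(x i * (((m:ℝ)+1) * esym (m+1) ((univ : Finset (Fin N)).erase i) x)) := by
    intro i
    rw [← key]
    rw [Finset.mul_sum, ← Finset.sum_neg_distrib]
    exact Finset.sum_congr rfl fun j _ => by ring
  have hkey2 : ∑ i : Fin N, x i * esym (m+1) ((univ : Finset (Fin N)).erase i) x
      = ((m:ℝ)+1+1) * esym (m+2) (univ : Finset (Fin N)) x := by
    have h := key x (m+1) univ
    push_cast at h
    convert h using 2
  have h2S : (2:ℝ) * (∑ i : Fin N, ∑ j ∈ univ.erase i, F i j)
      = -(((m:ℝ)+1) * (((m:ℝ)+2) * esym (m+2) (univ : Finset (Fin N)) x)) := by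
    have : (2:ℝ) * (∑ i : Fin N, ∑ j ∈ univ.erase i, F i j)
        = ∑ i : Fin N, ∑ j ∈ univ.erase i, (F i j + F j i) := by
      rw [two_mul]
      nth_rewrite 2 [← hswap]
      rw [← Finset.sum_add_distrib]
      exact Finset.sum_congr rfl fun i _ => (Finset.sum_add_distrib).symm
    rw [this]
    rw [Finset.sum_congr rfl fun i _ => Finset.sum_congr rfl (h2 i)]
    rw [Finset.sum_congr rfl fun i _ => hkey1 i]
    have hfac : ∀ i : Fin N, -(x i * (((m:ℝ)+1) * esym (m+1) ((univ : Finset (Fin N)).erase i) x))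
        = -((m:ℝ)+1) * (x i * esym (m+1) ((univ : Finset (Fin N)).erase i) x) := fun i => by ring
    simp_rw [hfac]
    rw [← Finset.mul_sum, hkey2]
    ring
  push_cast
  linear_combination h2S / 2
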